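/- Let G be a connected graph of order n with maximum degree Δ and power domination number γ_p. Then rad_p(G) ≥ (n − γ_p)/(γ_p · Δ). -/

import Mathlib

open scoped Classical

/-- The closed neighbourhood `N[S]` of a finset of vertices. -/
noncomputable def closedNbhd {V : Type*} [Fintype V] (G : SimpleGraph V) (S : Finset V) :
    Finset V :=
  S ∪ S.biUnion fun v => G.neighborFinset v

/-- One propagation step of power domination. -/
noncomputable def pdStep {V : Type*} [Fintype V] (G : SimpleGraph V) (A : Finset V) : Finset V :=
  A ∪ closedNbhd G (A.filter fun v => (G.neighborFinset v \ A).card ≤ 1)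

/-- The monitored sets `P^i(S)`, with `P^0(S) = ∅` and `P^1(S) = N[S]`. -/
noncomputable def pdSeq {V : Type*} [Fintype V] (G : SimpleGraph V) (S : Finset V) : ℕ → Finset V
  | 0 => ∅
  | 1 => closedNbhd G S
  | (i + 2) => pdStep G (pdSeq G S (i + 1))

/-- `S` is a power dominating set of `G`. -/
def IsPDS {V : Type*} [Fintype V] (G : SimpleGraph V) (S : Finset V) : Prop :=
  ∃ i, pdSeq G S i = Finset.univ

/-- The power domination number `γ_p(G)`. -/
noncomputable def pdNum {V : Type*} [Fintype V] (G : SimpleGraph V) : ℕ :=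
  sInf {k | ∃ S : Finset V, IsPDS G S ∧ S.card = k}

/-- The propagation radius `rad_p(G, S)` of a PDS `S`. -/
noncomputable def pdRadS {V : Type*} [Fintype V] (G : SimpleGraph V) (S : Finset V) : ℕ :=
  sInf {i | pdSeq G S i = Finset.univ}

/-- The propagation radius `rad_p(G)`. -/
noncomputable def pdRad {V : Type*} [Fintype V] (G : SimpleGraph V) : ℕ :=
  sInf {r | ∃ S : Finset V, IsPDS G S ∧ S.card = pdNum G ∧ pdRadS G S = r}

section Aux

variable {V : Type*} [Fintype V] (G : SimpleGraph V) (S : Finset V)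

lemma pdSeq_subset_succ : ∀ i : ℕ, pdSeq G S i ⊆ pdSeq G S (i + 1)
  | 0 => by simp [pdSeq]
  | (i + 1) => by
      rw [show pdSeq G S (i + 2) = pdStep G (pdSeq G S (i + 1)) from rfl, pdStep]
      exact Finset.subset_union_left

lemma pdSeq_mono {i j : ℕ} (h : i ≤ j) : pdSeq G S i ⊆ pdSeq G S j := by
  induction j with
  | zero => simpa [Nat.le_zero.mp h] using Finset.Subset.refl _
  | succ j ih =>
      rcases Nat.lt_or_ge i (j+1) with h' | h'
      · exact (ih (by omega)).trans (pdSeq_subset_succ G S j)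
      · have : i = j + 1 := by omega
        subst this; exact Finset.Subset.refl _

/-- The monitoring time of a vertex. -/
noncomputable def mtt (w : V) : ℕ := sInf {i | w ∈ pdSeq G S i}

lemma mtt_le {w : V} {i : ℕ} (h : w ∈ pdSeq G S i) : mtt G S w ≤ i := Nat.sInf_le h

lemma mtt_nonempty {w : V} (h : 1 ≤ mtt G S w) : {i | w ∈ pdSeq G S i}.Nonempty := by
  by_contra hc
  rw [Set.not_nonempty_iff_eq_empty] at hc
  simp [mtt, hc] at h

lemma mem_mtt {w : V} (h : 1 ≤ mtt G S w) : w ∈ pdSeq G S (mtt G S w) :=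
  Nat.sInf_mem (mtt_nonempty G S h)

lemma mem_mtt' {w : V} {i : ℕ} (h : w ∈ pdSeq G S i) : w ∈ pdSeq G S (mtt G S w) :=
  Nat.sInf_mem (s := {i | w ∈ pdSeq G S i}) ⟨i, h⟩

lemma not_mem_of_lt_mtt {w : V} {j : ℕ} (h : j < mtt G S w) : w ∉ pdSeq G S j :=
  Nat.notMem_of_lt_sInf h

lemma one_le_mtt {w : V} {i : ℕ} (h : w ∈ pdSeq G S i) : 1 ≤ mtt G S w := by
  by_contra hc
  have h0 : mtt G S w = 0 := by omega
  have := mem_mtt' G S h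
  rw [h0] at this
  simp [pdSeq] at this

lemma prop_ex {w : V} (h : 2 ≤ mtt G S w) :
    ∃ v, v ∈ pdSeq G S (mtt G S w - 1) ∧
      ((G.neighborFinset v) \ pdSeq G S (mtt G S w - 1)).card ≤ 1 ∧
      w ∈ G.neighborFinset v := by
  have hmem : w ∈ pdSeq G S (mtt G S w) := mem_mtt G S (by omega)
  have hnot : w ∉ pdSeq G S (mtt G S w - 1) := not_mem_of_lt_mtt G S (by omega)
  obtain ⟨j, hj⟩ : ∃ j, mtt G S w = j + 2 := ⟨mtt G S w - 2, by omega⟩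
  rw [hj] at hmem hnot ⊢
  have h1 : j + 2 - 1 = j + 1 := rfl
  rw [h1] at hnot ⊢
  rw [show pdSeq G S (j + 2) = pdStep G (pdSeq G S (j + 1)) from rfl, pdStep,
    Finset.mem_union] at hmem
  rcases hmem with hmem | hmem
  · exact absurd hmem hnot
  · rw [closedNbhd, Finset.mem_union] at hmem
    rcases hmem with hmem | hmem
    · exact absurd (Finset.mem_of_mem_filter w hmem) hnot
    · rw [Finset.mem_biUnion] at hmem
      obtain ⟨v, hv, hwv⟩ := hmem
      rw [Finset.mem_filter] at hv
      exact ⟨v, hv.1, hv.2, hwv⟩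

/-- The propagator of a vertex monitored at time ≥ 2 (identity otherwise). -/
noncomputable def gfn (w : V) : V :=
  if h : 2 ≤ mtt G S w then (prop_ex G S h).choose else w

lemma gfn_spec {w : V} (h : 2 ≤ mtt G S w) :
    gfn G S w ∈ pdSeq G S (mtt G S w - 1) ∧
      ((G.neighborFinset (gfn G S w)) \ pdSeq G S (mtt G S w - 1)).card ≤ 1 ∧
      w ∈ G.neighborFinset (gfn G S w) := by
  rw [gfn, dif_pos h]
  exact (prop_ex G S h).choose_spec

lemma gfn_eq_self {w : V} (h : ¬ 2 ≤ mtt G S w) : gfn G S w = w := by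
  rw [gfn, dif_neg h]

lemma mtt_gfn_lt {w : V} (h : 2 ≤ mtt G S w) : mtt G S (gfn G S w) < mtt G S w := by
  have := mtt_le G S (gfn_spec G S h).1
  omega

lemma mtt_gfn_le (w : V) : mtt G S (gfn G S w) ≤ mtt G S w := by
  by_cases h : 2 ≤ mtt G S w
  · exact (mtt_gfn_lt G S h).le
  · rw [gfn_eq_self G S h]

lemma mtt_iterate_le (k : ℕ) (w : V) : mtt G S ((gfn G S)^[k] w) ≤ mtt G S w := by
  induction k with
  | zero => simp
  | succ k ih =>
      rw [Function.iterate_succ_apply']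
      exact (mtt_gfn_le G S _).trans ih

lemma child_uniq_aux {a b : V} (ha : 2 ≤ mtt G S a) (hb : 2 ≤ mtt G S b)
    (hle : mtt G S a ≤ mtt G S b) (hab : gfn G S a = gfn G S b) : a = b := by
  obtain ⟨hv1, hv2, hv3⟩ := gfn_spec G S ha
  obtain ⟨hw1, hw2, hw3⟩ := gfn_spec G S hb
  rw [← hab] at hw3
  have hanot : a ∉ pdSeq G S (mtt G S a - 1) := not_mem_of_lt_mtt G S (by omega)
  have hbnot : b ∉ pdSeq G S (mtt G S a - 1) := fun hmem =>
    (not_mem_of_lt_mtt G S (show mtt G S b - 1 < mtt G S b by omega))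
      (pdSeq_mono G S (by omega) hmem)
  have hamem : a ∈ G.neighborFinset (gfn G S a) \ pdSeq G S (mtt G S a - 1) :=
    Finset.mem_sdiff.mpr ⟨hv3, hanot⟩
  have hbmem : b ∈ G.neighborFinset (gfn G S a) \ pdSeq G S (mtt G S a - 1) :=
    Finset.mem_sdiff.mpr ⟨hw3, hbnot⟩
  exact Finset.card_le_one.mp hv2 a hamem b hbmem

lemma child_uniq {a b : V} (ha : 2 ≤ mtt G S a) (hb : 2 ≤ mtt G S b)
    (hab : gfn G S a = gfn G S b) : a = b := by
  rcases le_total (mtt G S a) (mtt G S b) with h | h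
  · exact child_uniq_aux G S ha hb h hab
  · exact (child_uniq_aux G S hb ha h hab.symm).symm

/-- The endpoint of the propagation chain. -/
noncomputable def Efn (w : V) : V :=
  if h : 2 ≤ mtt G S w then Efn (gfn G S w) else w
termination_by mtt G S w
decreasing_by exact mtt_gfn_lt G S h

lemma Efn_eq_self {w : V} (h : ¬ 2 ≤ mtt G S w) : Efn G S w = w := by
  rw [Efn, dif_neg h]

lemma Efn_gfn {w : V} (h : 2 ≤ mtt G S w) : Efn G S w = Efn G S (gfn G S w) := by
  rw [Efn, dif_pos h]

lemma chainE (w : V) : ∃ k, (gfn G S)^[k] w = Efn G S w := by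
  suffices H : ∀ n w, mtt G S w = n → ∃ k, (gfn G S)^[k] w = Efn G S w from H _ w rfl
  intro n
  induction n using Nat.strong_induction_on with
  | _ n ih =>
      intro w hw
      by_cases h : 2 ≤ mtt G S w
      · obtain ⟨k, hk⟩ := ih (mtt G S (gfn G S w)) (by rw [← hw]; exact mtt_gfn_lt G S h)
          (gfn G S w) rfl
        exact ⟨k + 1, by rw [Function.iterate_succ_apply, hk, ← Efn_gfn G S h]⟩
      · exact ⟨0, (Efn_eq_self G S h).symm⟩

lemma Efn_mem {w : V} (h : 2 ≤ mtt G S w) :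
    Efn G S w ∈ pdSeq G S 1 ∧ Efn G S w ∉ S := by
  suffices H : ∀ n w, mtt G S w = n → 2 ≤ mtt G S w →
      Efn G S w ∈ pdSeq G S 1 ∧ Efn G S w ∉ S from H _ w rfl h
  intro n
  induction n using Nat.strong_induction_on with
  | _ n ih =>
      intro w hw h2
      obtain ⟨hv1, hv2, hv3⟩ := gfn_spec G S h2
      rw [Efn_gfn G S h2]
      by_cases hg : 2 ≤ mtt G S (gfn G S w)
      · exact ih (mtt G S (gfn G S w)) (by rw [← hw]; exact mtt_gfn_lt G S h2)
          (gfn G S w) rfl hg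
      · rw [Efn_eq_self G S hg]
        have hone : 1 ≤ mtt G S (gfn G S w) := one_le_mtt G S hv1
        have hmem : gfn G S w ∈ pdSeq G S (mtt G S (gfn G S w)) := mem_mtt G S hone
        have h1 : mtt G S (gfn G S w) = 1 := by omega
        rw [h1] at hmem
        refine ⟨hmem, fun hS => ?_⟩
        have : w ∈ pdSeq G S 1 := by
          rw [show pdSeq G S 1 = closedNbhd G S from rfl, closedNbhd, Finset.mem_union]
          right
          exact Finset.mem_biUnion.mpr ⟨gfn G S w, hS, hv3⟩
        have := mtt_le G S (pdSeq_mono G S (show 1 ≤ mtt G S w - 1 by omega) this)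
        omega

lemma comp_lemma : ∀ (k : ℕ) {w1 w2 : V}, 2 ≤ mtt G S w2 →
    (gfn G S)^[k] w1 = gfn G S w2 →
    (∃ m, (gfn G S)^[m] w1 = w2) ∨ (∃ m, (gfn G S)^[m] w2 = w1) := by
  intro k
  induction k with
  | zero =>
      intro w1 w2 _ h
      exact Or.inr ⟨1, by simp [h.symm]⟩
  | succ k ih =>
      intro w1 w2 h2 h
      rw [Function.iterate_succ_apply'] at h
      by_cases hb : 2 ≤ mtt G S ((gfn G S)^[k] w1)
      · exact Or.inl ⟨k, child_uniq G S hb h2 h⟩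
      · rw [gfn_eq_self G S hb] at h
        exact ih h2 h

lemma compE : ∀ (w1 w2 : V), Efn G S w1 = Efn G S w2 →
    (∃ m, (gfn G S)^[m] w1 = w2) ∨ (∃ m, (gfn G S)^[m] w2 = w1) := by
  suffices H : ∀ n w1 w2, mtt G S w1 + mtt G S w2 = n → Efn G S w1 = Efn G S w2 →
      (∃ m, (gfn G S)^[m] w1 = w2) ∨ (∃ m, (gfn G S)^[m] w2 = w1) from
    fun w1 w2 h => H _ w1 w2 rfl h
  intro n
  induction n using Nat.strong_induction_on with
  | _ n ih =>
      intro w1 w2 hw hE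
      by_cases h1 : 2 ≤ mtt G S w1
      · by_cases h2 : 2 ≤ mtt G S w2
        · rw [Efn_gfn G S h1, Efn_gfn G S h2] at hE
          have hlt : mtt G S (gfn G S w1) + mtt G S (gfn G S w2) < n := by
            have := mtt_gfn_lt G S h1
            have := mtt_gfn_lt G S h2
            omega
          rcases ih _ hlt (gfn G S w1) (gfn G S w2) rfl hE with ⟨m, hm⟩ | ⟨m, hm⟩
          · have : (gfn G S)^[m + 1] w1 = gfn G S w2 := by
              rw [Function.iterate_succ_apply, ← hm]
            exact comp_lemma G S (m + 1) h2 this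
          · have : (gfn G S)^[m + 1] w2 = gfn G S w1 := by
              rw [Function.iterate_succ_apply, ← hm]
            exact (comp_lemma G S (m + 1) h1 this).symm
        · rw [Efn_eq_self G S h2] at hE
          obtain ⟨k, hk⟩ := chainE G S w1
          exact Or.inl ⟨k, by rw [hk, hE]⟩
      · rw [Efn_eq_self G S h1] at hE
        obtain ⟨k, hk⟩ := chainE G S w2
        exact Or.inr ⟨k, by rw [hk, ← hE]⟩

lemma Efn_inj {w1 w2 : V} (h1 : 2 ≤ mtt G S w1) (heq : mtt G S w1 = mtt G S w2)
    (hE : Efn G S w1 = Efn G S w2) : w1 = w2 := by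
  have key : ∀ (a b : V), 2 ≤ mtt G S a → mtt G S a = mtt G S b →
      (∃ m, (gfn G S)^[m] a = b) → a = b := by
    intro a b ha hab ⟨m, hm⟩
    rcases Nat.eq_zero_or_pos m with h0 | hpos
    · rw [h0] at hm; exact hm
    · exfalso
      obtain ⟨m', hm'⟩ : ∃ m', m = m' + 1 := ⟨m - 1, by omega⟩
      rw [hm', Function.iterate_succ_apply] at hm
      have : mtt G S b ≤ mtt G S (gfn G S a) := by
        rw [← hm]; exact mtt_iterate_le G S m' _
      have := mtt_gfn_lt G S ha
      omega
  rcases compE G S w1 w2 hE with h | h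
  · exact key w1 w2 h1 heq h
  · exact (key w2 w1 (by omega) heq.symm h).symm

lemma card_P1_sdiff : (pdSeq G S 1 \ S).card ≤ S.card * G.maxDegree := by
  have hsub : pdSeq G S 1 \ S ⊆ S.biUnion fun v => G.neighborFinset v := by
    intro x hx
    rw [Finset.mem_sdiff] at hx
    have := hx.1
    rw [show pdSeq G S 1 = closedNbhd G S from rfl, closedNbhd, Finset.mem_union] at this
    rcases this with h | h
    · exact absurd h hx.2
    · exact h
  calc (pdSeq G S 1 \ S).card ≤ (S.biUnion fun v => G.neighborFinset v).card :=
        Finset.card_le_card hsub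
    _ ≤ ∑ v ∈ S, (G.neighborFinset v).card := Finset.card_biUnion_le
    _ ≤ ∑ _v ∈ S, G.maxDegree := Finset.sum_le_sum fun v _ => by
        rw [SimpleGraph.card_neighborFinset_eq_degree]
        exact G.degree_le_maxDegree v
    _ = S.card * G.maxDegree := by rw [Finset.sum_const, smul_eq_mul]

lemma step_card (j : ℕ) :
    (pdSeq G S (j + 2)).card ≤ (pdSeq G S (j + 1)).card + S.card * G.maxDegree := by
  have hsub : pdSeq G S (j + 1) ⊆ pdSeq G S (j + 2) := pdSeq_subset_succ G S (j + 1)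
  have hdisj : (pdSeq G S (j + 2) \ pdSeq G S (j + 1)).card + (pdSeq G S (j + 1)).card
      = (pdSeq G S (j + 2)).card := Finset.card_sdiff_add_card_eq_card hsub
  have hnew : (pdSeq G S (j + 2) \ pdSeq G S (j + 1)).card ≤ (pdSeq G S 1 \ S).card := by
    apply Finset.card_le_card_of_injOn (Efn G S)
    · intro w hw
      rw [Finset.mem_coe, Finset.mem_sdiff] at hw
      have hmtt : mtt G S w = j + 2 := by
        have hle := mtt_le G S hw.1
        have hgt : ¬ mtt G S w ≤ j + 1 := fun hc =>
          hw.2 (pdSeq_mono G S hc (mem_mtt' G S hw.1))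
        omega
      have h2 : 2 ≤ mtt G S w := by omega
      obtain ⟨hm, hs⟩ := Efn_mem G S h2
      exact Finset.mem_sdiff.mpr ⟨hm, hs⟩
    · intro w1 hw1 w2 hw2 hE
      simp only [Finset.coe_sdiff, Set.mem_diff, Finset.mem_coe] at hw1 hw2
      have hmtt : ∀ w, w ∈ pdSeq G S (j + 2) → w ∉ pdSeq G S (j + 1) →
          mtt G S w = j + 2 := by
        intro w hmem hnot
        have hle := mtt_le G S hmem
        have hgt : ¬ mtt G S w ≤ j + 1 := fun hc =>
          hnot (pdSeq_mono G S hc (mem_mtt' G S hmem))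
        omega
      have m1 := hmtt w1 hw1.1 hw1.2
      have m2 := hmtt w2 hw2.1 hw2.2
      exact Efn_inj G S (by omega) (by omega) hE
  have hP1 := card_P1_sdiff G S
  omega

lemma total_card (j : ℕ) :
    (pdSeq G S (j + 1)).card ≤ S.card + (j + 1) * (S.card * G.maxDegree) := by
  induction j with
  | zero =>
      have h1 : pdSeq G S 1 ⊆ S ∪ (pdSeq G S 1 \ S) := by
        intro x hx
        by_cases hxS : x ∈ S
        · exact Finset.mem_union_left _ hxS
        · exact Finset.mem_union_right _ (Finset.mem_sdiff.mpr ⟨hx, hxS⟩)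
      have hc := Finset.card_le_card h1
      have h2 := Finset.card_union_le S (pdSeq G S 1 \ S)
      have h3 := card_P1_sdiff G S
      show (pdSeq G S 1).card ≤ S.card + 1 * (S.card * G.maxDegree)
      rw [one_mul]
      omega
  | succ j ih =>
      calc (pdSeq G S (j + 1 + 1)).card
          ≤ (pdSeq G S (j + 1)).card + S.card * G.maxDegree := step_card G S j
        _ ≤ (S.card + (j + 1) * (S.card * G.maxDegree)) + S.card * G.maxDegree :=
            Nat.add_le_add_right ih _
        _ = S.card + (j + 1 + 1) * (S.card * G.maxDegree) := by ring

end Aux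

theorem stmt_19 {V : Type*} [Fintype V] (G : SimpleGraph V) (n : ℕ)
    (hn : Fintype.card V = n) (hconn : G.Connected)
    (hDelta : 1 ≤ G.maxDegree) (hgamma : 1 ≤ pdNum G) :
    ((n : ℝ) - (pdNum G : ℝ)) / ((pdNum G : ℝ) * (G.maxDegree : ℝ)) ≤ (pdRad G : ℝ) := by
  classical
  have hVne : Nonempty V := hconn.nonempty
  have hne : {k | ∃ S : Finset V, IsPDS G S ∧ S.card = k}.Nonempty := by
    refine ⟨(Finset.univ : Finset V).card, Finset.univ, ⟨1, ?_⟩, rfl⟩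
    apply Finset.eq_univ_of_forall
    intro x
    rw [show pdSeq G Finset.univ 1 = closedNbhd G Finset.univ from rfl, closedNbhd]
    exact Finset.mem_union_left _ (Finset.mem_univ x)
  obtain ⟨S0, hS0, hcard0⟩ := Nat.sInf_mem hne
  have hradne : {r | ∃ S : Finset V, IsPDS G S ∧ S.card = pdNum G ∧ pdRadS G S = r}.Nonempty :=
    ⟨pdRadS G S0, S0, hS0, hcard0, rfl⟩
  obtain ⟨S1, hS1, hcard1, hrad1⟩ := Nat.sInf_mem hradne
  have hiset : {i | pdSeq G S1 i = Finset.univ}.Nonempty := hS1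
  have huniv : pdSeq G S1 (pdRad G) = Finset.univ := by
    rw [show pdRad G = pdRadS G S1 from hrad1.symm]
    exact Nat.sInf_mem hiset
  have hr1 : 1 ≤ pdRad G := by
    by_contra hc
    have h0 : pdRad G = 0 := by omega
    rw [h0] at huniv
    have : (Finset.univ : Finset V).Nonempty := Finset.univ_nonempty
    rw [← huniv] at this
    simp [pdSeq] at this
  obtain ⟨j, hj⟩ : ∃ j, pdRad G = j + 1 := ⟨pdRad G - 1, by omega⟩
  have hb := total_card G S1 j
  rw [← hj, huniv, hcard1] at hb
  have hbn : n ≤ pdNum G + pdRad G * (pdNum G * G.maxDegree) := by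
    rw [← hn, ← Finset.card_univ]
    exact hb
  have hpos : (0 : ℝ) < (pdNum G : ℝ) * (G.maxDegree : ℝ) := by
    have h1 : (1 : ℝ) ≤ (pdNum G : ℝ) := by exact_mod_cast hgamma
    have h2 : (1 : ℝ) ≤ (G.maxDegree : ℝ) := by exact_mod_cast hDelta
    nlinarith
  rw [div_le_iff₀ hpos]
  have : (n : ℝ) ≤ (pdNum G : ℝ) + (pdRad G : ℝ) * ((pdNum G : ℝ) * (G.maxDegree : ℝ)) := by
    exact_mod_cast hbn
  linarith
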